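/- Let A be an irreducible N×N matrix over ℝ ∪ {+∞} whose graph contains at least one circuit, λ its minimum average circuit weight, Â the normalised matrix Â_{ij} = A_{ij} − λ, and Â* = ⊖_{k=0}^{N−1} Â^{⊙k}. Let E^cr be the set of edges belonging to some circuit of G(A) of average weight λ, and V^cr the set of nodes incident to such circuits. Then for i, j ∈ V^cr, there exists a ∈ ℝ with a + (Â*)_{ki} = (Â*)_{kj} for all k if and only if i and j belong to the same maximal strongly connected subgraph of the critical graph (V^cr, E^cr), i.e., i = j or there are walks from i to j and from j to i using only edges of E^cr. -/

import Mathlib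

open scoped BigOperators

/-- Min-plus product of matrices over ℝ ∪ {+∞}: `(A ⊙ B) i j = min_k (A i k + B k j)`. -/
def mpMul {N : ℕ} (A B : Matrix (Fin N) (Fin N) (WithTop ℝ)) :
    Matrix (Fin N) (Fin N) (WithTop ℝ) :=
  fun i j => Finset.univ.inf fun k => A i k + B k j

/-- The min-plus identity matrix: `0` on the diagonal, `+∞` elsewhere. -/
def mpId {N : ℕ} : Matrix (Fin N) (Fin N) (WithTop ℝ) :=
  fun i j => if i = j then 0 else ⊤

/-- Min-plus matrix powers. -/
def mpPow {N : ℕ} (A : Matrix (Fin N) (Fin N) (WithTop ℝ)) : ℕ → Matrix (Fin N) (Fin N) (WithTop ℝ)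
  | 0 => mpId
  | k + 1 => mpMul A (mpPow A k)

/-- `IsWalk A l v j i` : `v` is a walk of length `l` from node `j` to node `i` in the
weighted digraph `G(A)`, where there is an edge from `b` to `a` whenever `A a b ≠ +∞`. -/
def IsWalk {N : ℕ} (A : Matrix (Fin N) (Fin N) (WithTop ℝ)) (l : ℕ)
    (v : Fin (l + 1) → Fin N) (j i : Fin N) : Prop :=
  v 0 = j ∧ v (Fin.last l) = i ∧ ∀ t : Fin l, A (v t.succ) (v t.castSucc) ≠ ⊤

/-- The weight of a walk: the sum of the weights of its edges. -/
def walkWeight {N : ℕ} (A : Matrix (Fin N) (Fin N) (WithTop ℝ)) (l : ℕ)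
    (v : Fin (l + 1) → Fin N) : WithTop ℝ :=
  ∑ t : Fin l, A (v t.succ) (v t.castSucc)

def normalised {N : ℕ} (A : Matrix (Fin N) (Fin N) (WithTop ℝ)) (lam : ℝ) :
    Matrix (Fin N) (Fin N) (WithTop ℝ) :=
  fun i j => A i j + ((-lam : ℝ) : WithTop ℝ)

def kleeneStar {N : ℕ} (B : Matrix (Fin N) (Fin N) (WithTop ℝ)) :
    Matrix (Fin N) (Fin N) (WithTop ℝ) :=
  fun i j => (Finset.range N).inf fun k => mpPow B k i j

/-- A node is critical if it lies on a circuit of average weight `lam`. -/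
def IsCriticalNode {N : ℕ} (A : Matrix (Fin N) (Fin N) (WithTop ℝ)) (lam : ℝ)
    (i : Fin N) : Prop :=
  ∃ (m : ℕ) (c : Fin (m + 1) → Fin N), 1 ≤ m ∧ IsWalk A m c (c 0) (c 0) ∧
    walkWeight A m c = (((m : ℝ) * lam : ℝ) : WithTop ℝ) ∧ ∃ t : Fin (m + 1), c t = i

/-- An edge from `j` to `i` is critical if it belongs to some circuit of average weight
`lam`. -/
def IsCriticalEdge {N : ℕ} (A : Matrix (Fin N) (Fin N) (WithTop ℝ)) (lam : ℝ)
    (j i : Fin N) : Prop :=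
  ∃ (m : ℕ) (c : Fin (m + 1) → Fin N), 1 ≤ m ∧ IsWalk A m c (c 0) (c 0) ∧
    walkWeight A m c = (((m : ℝ) * lam : ℝ) : WithTop ℝ) ∧
    ∃ t : Fin m, c t.castSucc = j ∧ c t.succ = i

/-- There is a walk from `i` to `j` using only critical edges. -/
def CriticalReach {N : ℕ} (A : Matrix (Fin N) (Fin N) (WithTop ℝ)) (lam : ℝ)
    (i j : Fin N) : Prop :=
  ∃ (l : ℕ) (v : Fin (l + 1) → Fin N), 1 ≤ l ∧ v 0 = i ∧ v (Fin.last l) = j ∧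
    ∀ t : Fin l, IsCriticalEdge A lam (v t.castSucc) (v t.succ)

namespace MPAux

variable {N : ℕ}

/-- weight of an ℕ-indexed walk -/
def wt (B : Matrix (Fin N) (Fin N) (WithTop ℝ)) (l : ℕ) (u : ℕ → Fin N) : WithTop ℝ :=
  ∑ t ∈ Finset.range l, B (u (t+1)) (u t)

def toFin (l : ℕ) (u : ℕ → Fin N) : Fin (l+1) → Fin N := fun t => u t.val

lemma walkWeight_toFin (B : Matrix (Fin N) (Fin N) (WithTop ℝ)) (l : ℕ) (u : ℕ → Fin N) :
    walkWeight B l (toFin l u) = wt B l u := by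
  unfold walkWeight wt toFin
  rw [← Fin.sum_univ_eq_sum_range (fun t => B (u (t+1)) (u t)) l]
  congr 1

lemma wt_normalised (A : Matrix (Fin N) (Fin N) (WithTop ℝ)) (lam : ℝ) (l : ℕ) (u : ℕ → Fin N) :
    wt (normalised A lam) l u = wt A l u + (((l : ℝ) * (-lam) : ℝ) : WithTop ℝ) := by
  induction l with
  | zero => simp [wt]
  | succ n ih =>
      unfold wt at *
      rw [Finset.sum_range_succ, Finset.sum_range_succ, ih]
      show wt A n u + _ + normalised A lam (u (n+1)) (u n) = wt A n u + A (u (n+1)) (u n) + _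
      unfold normalised
      have h : (((n+1:ℕ):ℝ)*(-lam)) = (n:ℝ)*(-lam) + (-lam) := by push_cast; ring
      rw [h, WithTop.coe_add]
      abel


lemma wt_ne_top_edge {B : Matrix (Fin N) (Fin N) (WithTop ℝ)} {l : ℕ} {u : ℕ → Fin N}
    (h : wt B l u ≠ ⊤) {t : ℕ} (ht : t < l) : B (u (t+1)) (u t) ≠ ⊤ := by
  intro hT
  exact h (WithTop.sum_eq_top.2 ⟨t, Finset.mem_range.2 ht, hT⟩)

/-- every closed walk has nonnegative normalised weight -/
lemma circ_nonneg {A : Matrix (Fin N) (Fin N) (WithTop ℝ)} {lam : ℝ}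
    (hlb : ∀ (m : ℕ) (i : Fin N) (c : Fin (m + 1) → Fin N), 1 ≤ m → IsWalk A m c i i →
      (((m : ℝ) * lam : ℝ) : WithTop ℝ) ≤ walkWeight A m c)
    {l : ℕ} (hl : 1 ≤ l) {u : ℕ → Fin N} (hc : u 0 = u l) :
    0 ≤ wt (normalised A lam) l u := by
  rw [wt_normalised]
  by_cases hT : wt A l u = ⊤
  · rw [hT]; simp
  · have hw : IsWalk A l (toFin l u) (u 0) (u 0) := by
      refine ⟨rfl, ?_, ?_⟩
      · show u ((Fin.last l).val) = u 0
        simp [Fin.last, hc.symm]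
      · intro t
        show A (u ((t.succ : Fin (l+1)).val)) (u ((t.castSucc : Fin (l+1)).val)) ≠ ⊤
        simp only [Fin.val_succ, Fin.coe_castSucc]
        exact wt_ne_top_edge hT t.isLt
    have h1 := hlb l (u 0) (toFin l u) hl hw
    rw [walkWeight_toFin] at h1
    calc (0 : WithTop ℝ) = (((l:ℝ) * lam : ℝ) : WithTop ℝ) + (((l : ℝ) * (-lam) : ℝ) : WithTop ℝ) := by
          rw [← WithTop.coe_add]; norm_num
      _ ≤ wt A l u + (((l : ℝ) * (-lam) : ℝ) : WithTop ℝ) := add_le_add_left h1 _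

/-- min-plus power bounds every walk weight -/
lemma mpPow_le_wt (B : Matrix (Fin N) (Fin N) (WithTop ℝ)) :
    ∀ (l : ℕ) (u : ℕ → Fin N) (i j : Fin N), u 0 = j → u l = i →
      mpPow B l i j ≤ wt B l u := by
  intro l
  induction l with
  | zero =>
      intro u i j h0 hl
      have : i = j := by rw [← h0, ← hl]
      simp [mpPow, mpId, this, wt]
  | succ n ih =>
      intro u i j h0 hl
      have h1 : mpPow B (n+1) i j ≤ B i (u n) + mpPow B n (u n) j :=
        Finset.inf_le (Finset.mem_univ (u n))
      have h2 : mpPow B n (u n) j ≤ wt B n u := ih u (u n) j h0 rfl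
      calc mpPow B (n+1) i j ≤ B i (u n) + mpPow B n (u n) j := h1
        _ ≤ B i (u n) + wt B n u := add_le_add_right h2 _
        _ = wt B (n+1) u := by
            unfold wt; rw [Finset.sum_range_succ, hl]; exact (add_comm _ _)

/-- attainment of min-plus powers by walks (when finite) -/
lemma exists_wt_eq_mpPow (B : Matrix (Fin N) (Fin N) (WithTop ℝ)) :
    ∀ (l : ℕ) (i j : Fin N), mpPow B l i j ≠ ⊤ →
      ∃ u : ℕ → Fin N, u 0 = j ∧ u l = i ∧ wt B l u = mpPow B l i j := by
  intro l
  induction l with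
  | zero =>
      intro i j h
      have hij : i = j := by
        by_contra hne
        exact h (by simp [mpPow, mpId, hne])
      exact ⟨fun _ => j, rfl, hij.symm, by simp [wt, mpPow, mpId, hij]⟩
  | succ n ih =>
      intro i j h
      have hne : (Finset.univ : Finset (Fin N)).Nonempty := ⟨i, Finset.mem_univ i⟩
      obtain ⟨k, -, hk⟩ := Finset.exists_mem_eq_inf Finset.univ hne
        (fun k => B i k + mpPow B n k j)
      have heq : mpPow B (n+1) i j = B i k + mpPow B n k j := hk
      have hfin : mpPow B n k j ≠ ⊤ := by
        intro hT; rw [hT] at heq; simp at heq; exact h heq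
      obtain ⟨u, h0, hn, hwt⟩ := ih k j hfin
      refine ⟨fun t => if t ≤ n then u t else i, by simp [h0], by simp, ?_⟩
      have hstep : ∀ t < n+1, (fun t => if t ≤ n then u t else i) t = u t := by
        intro t ht; simp [Nat.lt_succ_iff.1 ht]
      unfold wt
      rw [Finset.sum_range_succ]
      have hcong : ∑ t ∈ Finset.range n, B ((if t+1 ≤ n then u (t+1) else i)) ((if t ≤ n then u t else i))
          = ∑ t ∈ Finset.range n, B (u (t+1)) (u t) := by
        apply Finset.sum_congr rfl
        intro t ht
        have ht' := Finset.mem_range.1 ht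
        rw [if_pos (by omega), if_pos (by omega)]
      show (∑ t ∈ Finset.range n, B ((if t+1 ≤ n then u (t+1) else i)) ((if t ≤ n then u t else i)))
          + B (if n+1 ≤ n then u (n+1) else i) (if n ≤ n then u n else i) = _
      rw [hcong, if_neg (by omega), if_pos (le_refl n), hn, heq]
      show wt B n u + _ = _
      rw [hwt]; exact add_comm _ _


/-- concatenation of ℕ-indexed walks -/
def cat (l1 : ℕ) (u1 u2 : ℕ → Fin N) : ℕ → Fin N :=
  fun t => if t < l1 then u1 t else u2 (t - l1)

lemma cat_left {l1 : ℕ} {u1 u2 : ℕ → Fin N} (h : u1 l1 = u2 0) {t : ℕ} (ht : t ≤ l1) :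
    cat l1 u1 u2 t = u1 t := by
  unfold cat
  rcases lt_or_eq_of_le ht with h' | h'
  · rw [if_pos h']
  · subst h'; rw [if_neg (lt_irrefl _)]; simpa using h.symm

lemma cat_right {l1 : ℕ} {u1 u2 : ℕ → Fin N} (h : u1 l1 = u2 0) (t : ℕ) :
    cat l1 u1 u2 (l1 + t) = u2 t := by
  unfold cat
  rcases Nat.eq_zero_or_pos t with h' | h'
  · subst h'; rw [if_neg (by omega)]; simp
  · rw [if_neg (by omega)]; congr 1; omega

lemma wt_cat (B : Matrix (Fin N) (Fin N) (WithTop ℝ)) {l1 : ℕ} (l2 : ℕ) {u1 u2 : ℕ → Fin N}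
    (h : u1 l1 = u2 0) :
    wt B (l1 + l2) (cat l1 u1 u2) = wt B l1 u1 + wt B l2 u2 := by
  unfold wt
  rw [Finset.sum_range_add]
  congr 1
  · apply Finset.sum_congr rfl
    intro t ht
    have ht' := Finset.mem_range.1 ht
    rw [cat_left h (by omega), cat_left h (by omega)]
  · apply Finset.sum_congr rfl
    intro t ht
    rw [show l1 + t + 1 = l1 + (t + 1) by omega, cat_right h, cat_right h]

lemma cat_zero {l1 : ℕ} {u1 u2 : ℕ → Fin N} (h : u1 l1 = u2 0) : cat l1 u1 u2 0 = u1 0 :=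
  cat_left h (Nat.zero_le _)

lemma cat_last {l1 : ℕ} (l2 : ℕ) {u1 u2 : ℕ → Fin N} (h : u1 l1 = u2 0) :
    cat l1 u1 u2 (l1 + l2) = u2 l2 := cat_right h l2

/-- the key shortening lemma: the Kleene star is below every min-plus power -/
lemma kleeneStar_le_mpPow {A : Matrix (Fin N) (Fin N) (WithTop ℝ)} {lam : ℝ}
    (hlb : ∀ (m : ℕ) (i : Fin N) (c : Fin (m + 1) → Fin N), 1 ≤ m → IsWalk A m c i i →
      (((m : ℝ) * lam : ℝ) : WithTop ℝ) ≤ walkWeight A m c)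
    (hN : 1 ≤ N) :
    ∀ (l : ℕ) (i j : Fin N), kleeneStar (normalised A lam) i j ≤ mpPow (normalised A lam) l i j := by
  intro l
  induction l using Nat.strong_induction_on with
  | _ l ih =>
    intro i j
    by_cases hl : l < N
    · exact Finset.inf_le (Finset.mem_range.2 hl)
    · push_neg at hl
      by_cases hT : mpPow (normalised A lam) l i j = ⊤
      · rw [hT]; exact le_top
      · set B := normalised A lam with hB
        obtain ⟨u, h0, hlu, hwt⟩ := exists_wt_eq_mpPow B l i j hT
        -- pigeonhole: among u 0, ..., u N there is a repeat
        have hpig : ∃ t1 t2, t1 < t2 ∧ t2 ≤ l ∧ u t1 = u t2 := by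
          have hcard : (Fintype.card (Fin N)) < Fintype.card (Fin (N+1)) := by simp
          obtain ⟨a, b, hab, heq⟩ := Fintype.exists_ne_map_eq_of_card_lt
            (fun t : Fin (N+1) => u t.val) hcard
          rcases Nat.lt_or_ge a.val b.val with h' | h'
          · exact ⟨a.val, b.val, h', by omega, heq⟩
          · have : b.val < a.val := by
              rcases Nat.lt_or_ge b.val a.val with h'' | h''
              · exact h''
              · exact absurd (Fin.ext (by omega)) hab
            exact ⟨b.val, a.val, this, by omega, heq.symm⟩
        obtain ⟨t1, t2, h12, h2l, hrep⟩ := hpig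
        set d := t2 - t1 with hd
        have hd1 : 1 ≤ d := by omega
        -- shortened walk
        set u' : ℕ → Fin N := fun t => if t ≤ t1 then u t else u (t + d) with hu'
        have hshift : ∀ s : ℕ, u' (t1 + s) = u (t2 + s) := by
          intro s
          have hs : u' (t1+s) = if t1 + s ≤ t1 then u (t1+s) else u (t1+s+d) := rfl
          rcases Nat.eq_zero_or_pos s with h' | h'
          · subst h'; rw [hs, if_pos (by omega)]; simpa using hrep
          · rw [hs, if_neg (by omega)]; congr 1; omega
        have hsplit : wt B l u = wt B (l - d) u' + wt B d (fun s => u (t1 + s)) := by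
          have hl' : l = t1 + d + (l - t2) := by omega
          have hl'' : l - d = t1 + (l - t2) := by omega
          rw [hl'']
          unfold wt
          rw [show Finset.range l = Finset.range (t1 + d + (l - t2)) by rw [← hl'],
            Finset.sum_range_add, Finset.sum_range_add, Finset.sum_range_add]
          have e1 : ∀ t ∈ Finset.range t1, B (u' (t+1)) (u' t) = B (u (t+1)) (u t) := by
            intro t ht
            have := Finset.mem_range.1 ht
            simp only [hu', if_pos (by omega : t ≤ t1), if_pos (by omega : t + 1 ≤ t1)]
          have e2 : ∀ t ∈ Finset.range (l - t2),
              B (u' (t1 + t + 1)) (u' (t1 + t)) = B (u (t1 + d + t + 1)) (u (t1 + d + t)) := by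
            intro t ht
            rw [show t1 + t + 1 = t1 + (t + 1) by omega, hshift, hshift,
              show t2 + (t + 1) = t1 + d + t + 1 by omega, show t2 + t = t1 + d + t by omega]
          rw [Finset.sum_congr rfl e1, Finset.sum_congr rfl e2]
          have e3 : ∑ x ∈ Finset.range d, B (u (t1 + (x + 1))) (u (t1 + x))
              = ∑ x ∈ Finset.range d, B (u (t1 + x + 1)) (u (t1 + x)) := by
            apply Finset.sum_congr rfl
            intro x hx
            rw [show t1 + (x+1) = t1 + x + 1 from by omega]
          rw [e3]
          abel
        have hcirc : (0 : WithTop ℝ) ≤ wt B d (fun s => u (t1 + s)) := by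
          apply circ_nonneg hlb hd1
          show u (t1 + 0) = u (t1 + d)
          rw [show t1 + d = t2 by omega]
          simpa using hrep
        have hle : wt B (l - d) u' ≤ wt B l u := by
          rw [hsplit]
          calc wt B (l - d) u' = wt B (l - d) u' + 0 := by rw [add_zero]
            _ ≤ _ := add_le_add_right hcirc _
        have h0' : u' 0 = j := by simp [hu', h0]
        have hl'' : u' (l - d) = i := by
          rcases Nat.lt_or_ge t1 (l - d) with h' | h'
          · simp only [hu', if_neg (by omega : ¬ (l - d ≤ t1))]
            rw [show l - d + d = l by omega, hlu]
          · have ht1 : t1 = l - d := by omega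
            simp only [hu', if_pos (by omega : l - d ≤ t1)]
            rw [← ht1, hrep, show t2 = l by omega, hlu]
        calc kleeneStar B i j ≤ mpPow B (l - d) i j := ih (l - d) (by omega) i j
          _ ≤ wt B (l - d) u' := mpPow_le_wt B (l - d) u' i j h0' hl''
          _ ≤ wt B l u := hle
          _ = mpPow B l i j := hwt

/-- diagonal of the Kleene star of the normalised matrix is `0` -/
lemma kleeneStar_diag {A : Matrix (Fin N) (Fin N) (WithTop ℝ)} {lam : ℝ}
    (hlb : ∀ (m : ℕ) (i : Fin N) (c : Fin (m + 1) → Fin N), 1 ≤ m → IsWalk A m c i i →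
      (((m : ℝ) * lam : ℝ) : WithTop ℝ) ≤ walkWeight A m c)
    (hN : 1 ≤ N) (i : Fin N) : kleeneStar (normalised A lam) i i = 0 := by
  set B := normalised A lam with hB
  apply le_antisymm
  · calc kleeneStar B i i ≤ mpPow B 0 i i := Finset.inf_le (Finset.mem_range.2 hN)
      _ = 0 := by simp [mpPow, mpId]
  · apply Finset.le_inf
    intro k _
    match k with
    | 0 => simp [mpPow, mpId]
    | (n+1) =>
      by_cases hT : mpPow B (n+1) i i = ⊤
      · rw [hT]; exact le_top
      · obtain ⟨u, h0, hl, hwt⟩ := exists_wt_eq_mpPow B (n+1) i i hT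
        rw [← hwt]
        exact circ_nonneg hlb (by omega) (by rw [h0, hl])

/-- if there is a walk from `i0` to `j0` of normalised weight `w`, columns relate -/
lemma star_le_of_walk {A : Matrix (Fin N) (Fin N) (WithTop ℝ)} {lam : ℝ}
    (hlb : ∀ (m : ℕ) (i : Fin N) (c : Fin (m + 1) → Fin N), 1 ≤ m → IsWalk A m c i i →
      (((m : ℝ) * lam : ℝ) : WithTop ℝ) ≤ walkWeight A m c)
    (hN : 1 ≤ N) {i0 j0 : Fin N} {l2 : ℕ} {u : ℕ → Fin N}
    (h0 : u 0 = i0) (hl : u l2 = j0) {w : ℝ} (hw : wt (normalised A lam) l2 u = (w : WithTop ℝ))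
    (k : Fin N) :
    kleeneStar (normalised A lam) k i0 ≤ (w : WithTop ℝ) + kleeneStar (normalised A lam) k j0 := by
  set B := normalised A lam with hB
  by_cases hT : kleeneStar B k j0 = ⊤
  · rw [hT]; simp
  · have hne : (Finset.range N).Nonempty := ⟨0, Finset.mem_range.2 hN⟩
    obtain ⟨l, -, hl'⟩ := Finset.exists_mem_eq_inf (Finset.range N) hne
      (fun n => mpPow B n k j0)
    have heq : kleeneStar B k j0 = mpPow B l k j0 := hl'
    rw [heq] at hT ⊢
    obtain ⟨v, hv0, hvl, hvwt⟩ := exists_wt_eq_mpPow B l k j0 hT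
    have hcat0 : u l2 = v 0 := by rw [hl, hv0]
    calc kleeneStar B k i0 ≤ mpPow B (l2 + l) k i0 := kleeneStar_le_mpPow hlb hN _ k i0
      _ ≤ wt B (l2 + l) (cat l2 u v) := by
          apply mpPow_le_wt
          · rw [cat_zero hcat0, h0]
          · rw [cat_last l hcat0, hvl]
      _ = (w : WithTop ℝ) + mpPow B l k j0 := by rw [wt_cat B l hcat0, hw, hvwt]

/-- around a critical edge from `x` to `y` (entry `B y x`) there is a return path
from `y` to `x` of normalised weight `-(B y x)` -/
lemma crit_edge_path {A : Matrix (Fin N) (Fin N) (WithTop ℝ)} {lam : ℝ} {x y : Fin N}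
    (h : IsCriticalEdge A lam x y) :
    ∃ (r : ℝ) (L : ℕ) (P : ℕ → Fin N), normalised A lam y x = (r : WithTop ℝ) ∧
      P 0 = y ∧ P L = x ∧ wt (normalised A lam) L P = ((-r : ℝ) : WithTop ℝ) := by
  set B := normalised A lam with hB
  obtain ⟨m, c, hm, hwalk, hwt, s, hs1, hs2⟩ := h
  have hlast : c (Fin.last m) = c 0 := hwalk.2.1
  have hedges : ∀ t : Fin m, A (c t.succ) (c t.castSucc) ≠ ⊤ := hwalk.2.2
  have hmpos : 0 < m := hm
  -- periodic extension of the circuit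
  set ctil : ℕ → Fin N := fun t => c ⟨t % m, lt_of_lt_of_le (Nat.mod_lt t hmpos) (Nat.le_succ m)⟩ with hctil
  have hAt : ∀ (t : ℕ) (ht : t < m), ctil t = c (Fin.castSucc ⟨t, ht⟩) := by
    intro t ht
    show c _ = c _
    congr 1
    exact Fin.ext (by simp [Nat.mod_eq_of_lt ht])
  have hBt : ∀ (t : ℕ) (ht : t < m), ctil (t+1) = c (Fin.succ ⟨t, ht⟩) := by
    intro t ht
    rcases Nat.lt_or_ge (t+1) m with h' | h'
    · show c _ = c _
      congr 1
      exact Fin.ext (by simp [Fin.val_succ, Nat.mod_eq_of_lt h'])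
    · have hm' : t + 1 = m := by omega
      have h0 : ctil (t+1) = c 0 := by
        show c _ = c _
        congr 1
        exact Fin.ext (by simp [hm'])
      rw [h0, ← hlast]
      congr 1
      exact Fin.ext (by simp [Fin.val_succ, hm', Fin.last])
  have hperC : ∀ t, ctil (t + m) = ctil t := by
    intro t
    show c _ = c _
    congr 1
    exact Fin.ext (by simp [Nat.add_mod_right])
  set g : ℕ → WithTop ℝ := fun t => B (ctil (t+1)) (ctil t) with hg
  have hper : ∀ t, g (t + m) = g t := by
    intro t
    show B (ctil (t+m+1)) (ctil (t+m)) = _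
    rw [show t + m + 1 = t + 1 + m by omega, hperC, hperC]
  have hgfin0 : ∀ t < m, g t ≠ ⊤ := by
    intro t ht
    show B (ctil (t+1)) (ctil t) ≠ ⊤
    rw [hAt t ht, hBt t ht, hB]
    unfold normalised
    exact WithTop.add_ne_top.2 ⟨hedges ⟨t, ht⟩, WithTop.coe_ne_top⟩
  have hgfin : ∀ t, g t ≠ ⊤ := by
    intro t
    induction t using Nat.strong_induction_on with
    | _ t ih =>
      rcases Nat.lt_or_ge t m with h' | h'
      · exact hgfin0 t h'
      · have : g t = g (t - m) := by rw [← hper (t - m), Nat.sub_add_cancel h']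
        rw [this]
        exact ih (t - m) (by omega)
  -- the circuit has normalised weight 0
  have hwtA : wt A m ctil = walkWeight A m c := by
    unfold wt walkWeight
    rw [← Fin.sum_univ_eq_sum_range (fun t => A (ctil (t+1)) (ctil t)) m]
    apply Finset.sum_congr rfl
    intro t _
    rw [hAt t.val t.isLt, hBt t.val t.isLt]
  have hsum0 : ∑ t ∈ Finset.range m, g t = 0 := by
    have h1 : ∑ t ∈ Finset.range m, g t = wt B m ctil := rfl
    rw [h1, hB, wt_normalised, hwtA, hwt, ← WithTop.coe_add]
    norm_num
  -- shift invariance of the circuit sum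
  have hshift : ∀ a, ∑ t ∈ Finset.range m, g (a + t) = ∑ t ∈ Finset.range m, g t := by
    intro a
    induction a with
    | zero => simp
    | succ n ihn =>
      have h1 : ∑ t ∈ Finset.range (m+1), g (n + t)
          = ∑ t ∈ Finset.range m, g (n + t) + g (n + m) := Finset.sum_range_succ _ m
      have h2 : ∑ t ∈ Finset.range (m+1), g (n + t)
          = (∑ t ∈ Finset.range m, g (n + (t+1))) + g (n + 0) := Finset.sum_range_succ' _ m
      have h3 : ∑ t ∈ Finset.range m, g (n + (t+1)) = ∑ t ∈ Finset.range m, g (n + 1 + t) := by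
        apply Finset.sum_congr rfl
        intro t _
        congr 1
        omega
      have h5 : ∑ t ∈ Finset.range m, g (n + 1 + t) + g n = ∑ t ∈ Finset.range m, g (n + t) + g n := by
        rw [← h3, show g n = g (n + 0) from by rw [Nat.add_zero], ← h2, h1, hper, Nat.add_zero]
      exact (WithTop.add_right_cancel (hgfin n) h5).trans ihn
  -- the value of the critical edge
  have hgs : g s.val = B y x := by
    show B (ctil (s.val + 1)) (ctil s.val) = B y x
    rw [hAt s.val s.isLt, hBt s.val s.isLt]
    show B (c s.succ) (c s.castSucc) = B y x
    rw [hs1, hs2]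
  obtain ⟨r, hr⟩ : ∃ r : ℝ, g s.val = (r : WithTop ℝ) := by
    cases hgv : g s.val with
    | top => exact absurd hgv (hgfin s.val)
    | coe r => exact ⟨r, rfl⟩
  obtain ⟨m', hmm⟩ : ∃ m', m = m' + 1 := ⟨m - 1, by omega⟩
  set P : ℕ → Fin N := fun t => ctil (s.val + 1 + t) with hP
  have hwtP : wt B m' P = ∑ t ∈ Finset.range m', g (s.val + (t + 1)) := by
    unfold wt
    apply Finset.sum_congr rfl
    intro t _
    show B (ctil (s.val + 1 + (t+1))) (ctil (s.val+1+t)) = B (ctil (s.val+(t+1)+1)) (ctil (s.val+(t+1)))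
    rw [show s.val + 1 + (t+1) = s.val + (t+1) + 1 by omega, show s.val + 1 + t = s.val + (t+1) by omega]
  have hsplit : (∑ t ∈ Finset.range m', g (s.val + (t+1))) + g s.val
      = ∑ t ∈ Finset.range m, g (s.val + t) := by
    rw [show Finset.range m = Finset.range (m' + 1) from congrArg Finset.range hmm]
    have := (Finset.sum_range_succ' (fun t => g (s.val + t)) m').symm
    simpa using this
  have hzero : wt B m' P + (r : WithTop ℝ) = 0 := by
    rw [hwtP, ← hr, hsplit, hshift, hsum0]
  obtain ⟨w, hw⟩ : ∃ w : ℝ, wt B m' P = (w : WithTop ℝ) := by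
    cases hwv : wt B m' P with
    | top =>
        exfalso
        rw [hwtP] at hwv
        obtain ⟨t, -, ht⟩ := WithTop.sum_eq_top.1 hwv
        exact hgfin _ ht
    | coe w => exact ⟨w, rfl⟩
  have hwr : w = -r := by
    rw [hw, ← WithTop.coe_add] at hzero
    have : w + r = 0 := by exact_mod_cast hzero
    linarith
  refine ⟨r, m', P, ?_, ?_, ?_, ?_⟩
  · rw [← hgs, hr]
  · show ctil (s.val + 1 + 0) = y
    rw [Nat.add_zero, hBt s.val s.isLt, hs2]
  · show ctil (s.val + 1 + m') = x
    rw [show s.val + 1 + m' = s.val + m by omega, hperC, hAt s.val s.isLt, hs1]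
  · rw [hw, hwr]

/-- a critical edge has finite normalised weight -/
lemma crit_edge_fin {A : Matrix (Fin N) (Fin N) (WithTop ℝ)} {lam : ℝ} {x y : Fin N}
    (h : IsCriticalEdge A lam x y) : ∃ r : ℝ, normalised A lam y x = (r : WithTop ℝ) := by
  obtain ⟨r, -, -, hr, -⟩ := crit_edge_path h
  exact ⟨r, hr⟩

/-- for any walk along critical edges there is a reverse walk of opposite weight -/
lemma compl_walk {A : Matrix (Fin N) (Fin N) (WithTop ℝ)} {lam : ℝ} :
    ∀ (l : ℕ) (u : ℕ → Fin N), (∀ t < l, IsCriticalEdge A lam (u t) (u (t+1))) →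
      ∃ (L : ℕ) (W : ℕ → Fin N) (w : ℝ), W 0 = u l ∧ W L = u 0 ∧
        wt (normalised A lam) l u = (w : WithTop ℝ) ∧
        wt (normalised A lam) L W = ((-w : ℝ) : WithTop ℝ) := by
  intro l
  induction l with
  | zero =>
      intro u _
      exact ⟨0, u, 0, rfl, rfl, by simp [wt], by simp [wt]⟩
  | succ n ih =>
      intro u hcrit
      obtain ⟨L1, W1, w1, hW0, hWL, hw1, hW1⟩ := ih u (fun t ht => hcrit t (by omega))
      obtain ⟨r, L0, P, hr, hP0, hPL, hPwt⟩ := crit_edge_path (hcrit n (by omega))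
      have hcat0 : P L0 = W1 0 := by rw [hPL, hW0]
      refine ⟨L0 + L1, cat L0 P W1, w1 + r, ?_, ?_, ?_, ?_⟩
      · rw [cat_zero hcat0, hP0]
      · rw [cat_last L1 hcat0, hWL]
      · unfold wt
        rw [Finset.sum_range_succ]
        show wt (normalised A lam) n u + normalised A lam (u (n+1)) (u n) = _
        rw [hw1, hr, ← WithTop.coe_add]
      · rw [wt_cat _ L1 hcat0, hPwt, hW1, ← WithTop.coe_add]
        norm_num

/-- a closed walk along critical edges has normalised weight zero -/
lemma crit_cycle_zero {A : Matrix (Fin N) (Fin N) (WithTop ℝ)} {lam : ℝ}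
    (hlb : ∀ (m : ℕ) (i : Fin N) (c : Fin (m + 1) → Fin N), 1 ≤ m → IsWalk A m c i i →
      (((m : ℝ) * lam : ℝ) : WithTop ℝ) ≤ walkWeight A m c)
    {l : ℕ} (hl : 1 ≤ l) {u : ℕ → Fin N} (hc : u 0 = u l)
    (hcrit : ∀ t < l, IsCriticalEdge A lam (u t) (u (t+1))) :
    wt (normalised A lam) l u = 0 := by
  obtain ⟨L, W, w, hW0, hWL, hw, hWwt⟩ := compl_walk l u hcrit
  have hge : (0:ℝ) ≤ w := by
    have h0 := circ_nonneg hlb hl hc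
    rw [hw] at h0
    exact_mod_cast h0
  have hle : w ≤ 0 := by
    rcases Nat.eq_zero_or_pos L with hL | hL
    · subst hL
      have : wt (normalised A lam) 0 W = (0 : WithTop ℝ) := by simp [wt]
      rw [hWwt] at this
      have : (-w : ℝ) = 0 := by exact_mod_cast this
      linarith
    · have hWc : W 0 = W L := by rw [hW0, hWL, hc]
      have h0 := circ_nonneg hlb hL hWc
      rw [hWwt] at h0
      have : (0:ℝ) ≤ -w := by exact_mod_cast h0
      linarith
  have : w = 0 := le_antisymm hle hge
  rw [hw, this]
  norm_num

/-- transfer `CriticalReach` to ℕ-indexed walks -/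
lemma reach_to_nat {A : Matrix (Fin N) (Fin N) (WithTop ℝ)} {lam : ℝ} {i j : Fin N}
    (h : CriticalReach A lam i j) :
    ∃ (l : ℕ) (u : ℕ → Fin N), 1 ≤ l ∧ u 0 = i ∧ u l = j ∧
      ∀ t < l, IsCriticalEdge A lam (u t) (u (t+1)) := by
  obtain ⟨l, v, hl, h0, hlast, hcrit⟩ := h
  refine ⟨l, fun t => v ⟨min t l, by omega⟩, hl, ?_, ?_, ?_⟩
  · rw [← h0]; congr 1
  · rw [← hlast]; congr 1; exact Fin.ext (by simp [Fin.last])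
  · intro t ht
    have := hcrit ⟨t, ht⟩
    convert this using 2
    · exact Fin.ext (by simp; omega)
    · exact Fin.ext (by simp [Fin.val_succ]; omega)

/-- transfer ℕ-indexed critical walks to `CriticalReach` -/
lemma nat_to_reach {A : Matrix (Fin N) (Fin N) (WithTop ℝ)} {lam : ℝ} {i j : Fin N}
    {l : ℕ} (hl : 1 ≤ l) {u : ℕ → Fin N} (h0 : u 0 = i) (hlast : u l = j)
    (hcrit : ∀ t < l, IsCriticalEdge A lam (u t) (u (t+1))) :
    CriticalReach A lam i j := by
  refine ⟨l, toFin l u, hl, h0, ?_, ?_⟩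
  · show u ((Fin.last l).val) = j
    simpa [Fin.last] using hlast
  · intro t
    show IsCriticalEdge A lam (u ((t.castSucc : Fin (l+1)).val)) (u ((t.succ : Fin (l+1)).val))
    simp only [Fin.coe_castSucc, Fin.val_succ]
    exact hcrit t.val t.isLt

/-- every edge of a circuit of normalised weight zero is critical -/
lemma cycle_edges_critical {A : Matrix (Fin N) (Fin N) (WithTop ℝ)} {lam : ℝ}
    {m : ℕ} (hm : 1 ≤ m) {c : ℕ → Fin N} (hc : c 0 = c m)
    (hz : wt (normalised A lam) m c = 0) :
    ∀ t < m, IsCriticalEdge A lam (c t) (c (t+1)) := by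
  have hwA : wt A m c = (((m : ℝ) * lam : ℝ) : WithTop ℝ) := by
    have h1 : wt (normalised A lam) m c = wt A m c + (((m : ℝ) * (-lam) : ℝ) : WithTop ℝ) :=
      wt_normalised A lam m c
    rw [hz] at h1
    cases hv : wt A m c with
    | top =>
        rw [hv, top_add] at h1
        exact absurd h1.symm (by simp)
    | coe a =>
        rw [hv, ← WithTop.coe_add] at h1
        have : a + (m : ℝ) * (-lam) = 0 := by exact_mod_cast h1.symm
        have ha : a = (m : ℝ) * lam := by linarith
        rw [ha]
  have hTop : wt A m c ≠ ⊤ := by rw [hwA]; exact WithTop.coe_ne_top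
  have hwalk : IsWalk A m (toFin m c) (c 0) (c 0) := by
    refine ⟨rfl, ?_, ?_⟩
    · show c ((Fin.last m).val) = c 0
      simp [Fin.last, hc.symm]
    · intro t
      show A (c ((t.succ : Fin (m+1)).val)) (c ((t.castSucc : Fin (m+1)).val)) ≠ ⊤
      simp only [Fin.val_succ, Fin.coe_castSucc]
      exact wt_ne_top_edge hTop t.isLt
  have hww : walkWeight A m (toFin m c) = (((m : ℝ) * lam : ℝ) : WithTop ℝ) := by
    rw [walkWeight_toFin, hwA]
  intro t ht
  refine ⟨m, toFin m c, hm, hwalk, hww, ⟨t, ht⟩, ?_, ?_⟩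
  · show c ((Fin.castSucc ⟨t, ht⟩ : Fin (m+1)).val) = c t
    simp
  · show c ((Fin.succ ⟨t, ht⟩ : Fin (m+1)).val) = c (t+1)
    simp [Fin.val_succ]

lemma wt_fin_of_crit {A : Matrix (Fin N) (Fin N) (WithTop ℝ)} {lam : ℝ}
    {l : ℕ} {u : ℕ → Fin N} (hcrit : ∀ t < l, IsCriticalEdge A lam (u t) (u (t+1))) :
    ∃ w : ℝ, wt (normalised A lam) l u = (w : WithTop ℝ) := by
  cases hv : wt (normalised A lam) l u with
  | top =>
      exfalso
      obtain ⟨t, htm, ht⟩ := WithTop.sum_eq_top.1 hv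
      obtain ⟨r, hr⟩ := crit_edge_fin (hcrit t (Finset.mem_range.1 htm))
      rw [hr] at ht
      exact WithTop.coe_ne_top ht
  | coe w => exact ⟨w, rfl⟩

end MPAux

open MPAux

/-- for irreducible `A` (graph containing a circuit) with minimum average
circuit weight `lam`, and critical nodes `i, j`, the `i`-th and `j`-th columns of the
Kleene star of the normalised matrix differ by a real constant if and only if `i` and `j`
belong to the same maximal strongly connected subgraph of the critical graph. -/
theorem columns_parallel_iff_same_critical_mscs {N : ℕ}
    (A : Matrix (Fin N) (Fin N) (WithTop ℝ))
    (hirr : ∀ i j : Fin N, ∃ (l : ℕ) (p : Fin (l + 1) → Fin N), IsWalk A l p i j)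
    (lam : ℝ)
    (hlb : ∀ (m : ℕ) (i : Fin N) (c : Fin (m + 1) → Fin N), 1 ≤ m → IsWalk A m c i i →
      (((m : ℝ) * lam : ℝ) : WithTop ℝ) ≤ walkWeight A m c)
    (hmin : ∃ (m : ℕ) (i : Fin N) (c : Fin (m + 1) → Fin N), 1 ≤ m ∧ IsWalk A m c i i ∧
      walkWeight A m c = (((m : ℝ) * lam : ℝ) : WithTop ℝ))
    (i j : Fin N) (hi : IsCriticalNode A lam i) (hj : IsCriticalNode A lam j) :
    (∃ a : ℝ, ∀ k : Fin N,
        ((a : ℝ) : WithTop ℝ) + kleeneStar (normalised A lam) k i =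
          kleeneStar (normalised A lam) k j) ↔
      (i = j ∨ (CriticalReach A lam i j ∧ CriticalReach A lam j i)) := by
  have hN : 1 ≤ N := Fin.pos i
  set B := normalised A lam with hB
  constructor
  · rintro ⟨a, ha⟩
    by_cases hij : i = j
    · exact Or.inl hij
    right
    -- the constant is the value of the star entries
    have hii : kleeneStar B i i = 0 := kleeneStar_diag hlb hN i
    have hjj : kleeneStar B j j = 0 := kleeneStar_diag hlb hN j
    have h1 : kleeneStar B i j = ((a : ℝ) : WithTop ℝ) := by
      have := ha i
      rw [hii, add_zero] at this
      exact this.symm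
    have h2 : kleeneStar B j i = (((-a : ℝ)) : WithTop ℝ) := by
      have h2' := ha j
      rw [hjj] at h2'
      cases hv : kleeneStar B j i with
      | top => rw [hv, add_top] at h2'; exact absurd h2' (by simp)
      | coe b =>
          rw [hv, ← WithTop.coe_add] at h2'
          have hb : a + b = 0 := by exact_mod_cast h2'
          have : b = -a := by linarith
          rw [this]
    -- attaining walks
    have hne : (Finset.range N).Nonempty := ⟨0, Finset.mem_range.2 hN⟩
    obtain ⟨l1, -, hl1x⟩ := Finset.exists_mem_eq_inf (Finset.range N) hne
      (fun n => mpPow B n i j)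
    have hl1 : kleeneStar B i j = mpPow B l1 i j := hl1x
    have hl1T : mpPow B l1 i j ≠ ⊤ := by
      rw [← hl1, h1]; exact WithTop.coe_ne_top
    obtain ⟨u1, hu10, hu1l, hu1wt⟩ := exists_wt_eq_mpPow B l1 i j hl1T
    have hu1w : wt B l1 u1 = ((a : ℝ) : WithTop ℝ) := by rw [hu1wt, ← hl1, h1]
    obtain ⟨l2, -, hl2x⟩ := Finset.exists_mem_eq_inf (Finset.range N) hne
      (fun n => mpPow B n j i)
    have hl2 : kleeneStar B j i = mpPow B l2 j i := hl2x
    have hl2T : mpPow B l2 j i ≠ ⊤ := by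
      rw [← hl2, h2]; exact WithTop.coe_ne_top
    obtain ⟨u2, hu20, hu2l, hu2wt⟩ := exists_wt_eq_mpPow B l2 j i hl2T
    have hu2w : wt B l2 u2 = (((-a : ℝ)) : WithTop ℝ) := by rw [hu2wt, ← hl2, h2]
    -- u1 : from j to i, length l1 ; u2 : from i to j, length l2
    have hl1p : 1 ≤ l1 := by
      rcases Nat.eq_zero_or_pos l1 with h' | h'
      · exfalso; apply hij; rw [← hu1l, h', hu10]
      · exact h'
    have hl2p : 1 ≤ l2 := by
      rcases Nat.eq_zero_or_pos l2 with h' | h'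
      · exfalso; apply hij; rw [← hu20, ← h']; exact hu2l
      · exact h'
    -- circuit: i → j (u2) then j → i (u1)
    have hcat0 : u2 l2 = u1 0 := by rw [hu2l, hu10]
    have hc0 : cat l2 u2 u1 0 = i := by rw [cat_zero hcat0, hu20]
    have hcl : cat l2 u2 u1 (l2 + l1) = i := by rw [cat_last l1 hcat0, hu1l]
    have hcz : wt B (l2 + l1) (cat l2 u2 u1) = 0 := by
      rw [wt_cat B l1 hcat0, hu2w, hu1w, ← WithTop.coe_add]
      norm_num
    have hcrit := cycle_edges_critical (A := A) (lam := lam) (by omega)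
      (by rw [hc0, hcl]) hcz
    refine ⟨?_, ?_⟩
    · -- i to j along u2
      apply nat_to_reach hl2p hu20 hu2l
      intro t ht
      have h3 := hcrit t (by omega)
      rwa [cat_left hcat0 (by omega), cat_left hcat0 (by omega)] at h3
    · -- j to i along u1
      apply nat_to_reach hl1p hu10 hu1l
      intro t ht
      have h3 := hcrit (l2 + t) (by omega)
      rwa [show l2 + t + 1 = l2 + (t + 1) by omega, cat_right hcat0, cat_right hcat0] at h3
  · rintro (rfl | ⟨hij_r, hji_r⟩)
    · exact ⟨0, fun k => by simp⟩
    obtain ⟨l2, u2, hl2p, hu20, hu2l, hcrit2⟩ := reach_to_nat hij_r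
    obtain ⟨l1, u1, hl1p, hu10, hu1l, hcrit1⟩ := reach_to_nat hji_r
    -- u2 : i → j, u1 : j → i, both critical
    have hcat0 : u2 l2 = u1 0 := by rw [hu2l, hu10]
    have hccrit : ∀ t < l2 + l1, IsCriticalEdge A lam (cat l2 u2 u1 t) (cat l2 u2 u1 (t+1)) := by
      intro t ht
      rcases Nat.lt_or_ge t l2 with h' | h'
      · rw [cat_left hcat0 (by omega), cat_left hcat0 (by omega)]
        exact hcrit2 t h'
      · obtain ⟨s, hs⟩ : ∃ s, t = l2 + s := ⟨t - l2, by omega⟩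
        subst hs
        rw [show l2 + s + 1 = l2 + (s + 1) by omega, cat_right hcat0, cat_right hcat0]
        exact hcrit1 s (by omega)
    have hclosed : cat l2 u2 u1 0 = cat l2 u2 u1 (l2 + l1) := by
      rw [cat_zero hcat0, cat_last l1 hcat0, hu20, hu1l]
    have hcz : wt B (l2 + l1) (cat l2 u2 u1) = 0 :=
      crit_cycle_zero hlb (by omega) hclosed hccrit
    obtain ⟨w2, hw2⟩ := wt_fin_of_crit hcrit2
    obtain ⟨w1, hw1⟩ := wt_fin_of_crit hcrit1
    have hsum : w2 + w1 = 0 := by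
      rw [wt_cat B l1 hcat0, hw2, hw1, ← WithTop.coe_add] at hcz
      exact_mod_cast hcz
    refine ⟨w1, fun k => ?_⟩
    have hle1 : kleeneStar B k j ≤ ((w1 : ℝ) : WithTop ℝ) + kleeneStar B k i :=
      star_le_of_walk hlb hN hu10 hu1l hw1 k
    have hle2 : kleeneStar B k i ≤ ((w2 : ℝ) : WithTop ℝ) + kleeneStar B k j :=
      star_le_of_walk hlb hN hu20 hu2l hw2 k
    apply le_antisymm
    · calc ((w1 : ℝ) : WithTop ℝ) + kleeneStar B k i
          ≤ (w1 : ℝ) + (((w2 : ℝ) : WithTop ℝ) + kleeneStar B k j) := add_le_add_right hle2 _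
        _ = (((w1 + w2 : ℝ)) : WithTop ℝ) + kleeneStar B k j := by
            rw [WithTop.coe_add, add_assoc]
        _ = kleeneStar B k j := by
            rw [show w1 + w2 = 0 by linarith]
            simp
    · exact hle1
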